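/- Let p ≥ 1, let h : ℝ^p → ℝ be convex and differentiable with ∇h Lipschitz continuous with constant L > 0 (Euclidean norm), let g : ℝ^p → ℝ be convex, and set F = h + g. Let D be a p×p diagonal matrix whose diagonal entries all lie in [c₁, c₂] with 0 < c₁ ≤ c₂, and let γ ∈ (0, c₁/L]. Let β, β', ξ ∈ ℝ^p and let q be a minimizer over ℝ^p of x ↦ g(x) + (1/(2γ)) ‖x − β‖_D². Then −2γ (F(q) − F(β')) ≥ ‖q − β'‖_D² + 2 ⟨q − β', ξ − γ D⁻¹ ∇h(ξ) − β⟩_D − ‖β' − ξ‖_D². -/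

import Mathlib

open scoped BigOperators
open MeasureTheory Filter

noncomputable def dInner {p : ℕ} (d : Fin p → ℝ) (x y : EuclideanSpace ℝ (Fin p)) : ℝ :=
  ∑ i, d i * x i * y i

noncomputable def dNorm {p : ℕ} (d : Fin p → ℝ) (x : EuclideanSpace ℝ (Fin p)) : ℝ :=
  Real.sqrt (dInner d x x)

noncomputable def dInvMul {p : ℕ} (d : Fin p → ℝ) (v : EuclideanSpace ℝ (Fin p)) :
    EuclideanSpace ℝ (Fin p) :=
  WithLp.toLp 2 (fun i => (d i)⁻¹ * v i)

section AuxLemmas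

open Set
open scoped RealInnerProductSpace

variable {E : Type*} [NormedAddCommGroup E] [InnerProductSpace ℝ E] [CompleteSpace E]

lemma hasDerivAt_comp_line' (h : E → ℝ) (h' : E → E)
    (hdiff : ∀ x, HasGradientAt h (h' x) x) (x v : E) (t : ℝ) :
    HasDerivAt (fun s : ℝ => h (x + s • v)) (⟪h' (x + t • v), v⟫) t := by
  have hline : HasDerivAt (fun s : ℝ => x + s • v) v t := by
    simpa using ((hasDerivAt_id t).smul_const v).const_add x
  have := (hdiff (x + t • v)).hasFDerivAt.comp_hasDerivAt t hline
  simpa [InnerProductSpace.toDual_apply_apply, Function.comp_def] using this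

lemma grad_convex_ineq' (h : E → ℝ) (h' : E → E) (hh : ConvexOn ℝ Set.univ h)
    (hdiff : ∀ x, HasGradientAt h (h' x) x) (x y : E) :
    h x + ⟪h' x, y - x⟫ ≤ h y := by
  set v := y - x with hv
  have hφ : ∀ t : ℝ, HasDerivAt (fun s : ℝ => h (x + s • v)) (⟪h' (x + t • v), v⟫) t :=
    hasDerivAt_comp_line' h h' hdiff x v
  have hconv : ConvexOn ℝ Set.univ (fun t : ℝ => h (x + t • v)) := by
    have := hh.comp_affineMap (AffineMap.lineMap x (x + v) : ℝ →ᵃ[ℝ] E)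
    simp only [AffineMap.coe_lineMap] at this
    have h2 : ((AffineMap.lineMap x (x+v) : ℝ →ᵃ[ℝ] E) ⁻¹' Set.univ) = Set.univ := by simp
    refine (this.subset (by simp [h2]) convex_univ).congr ?_
    intro t _
    simp [AffineMap.lineMap_apply]
    abel_nf
  have hslope := hconv.le_slope_of_hasDerivWithinAt_Ioi (Set.mem_univ (0:ℝ))
    (Set.mem_univ (1:ℝ)) one_pos ((hφ 0).hasDerivWithinAt)
  rw [slope_def_field] at hslope
  simp only [zero_smul, add_zero, one_smul, sub_zero, div_one] at hslope
  have hxy : x + v = y := by rw [hv]; abel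
  rw [hxy] at hslope
  linarith

lemma descent_lemma' (h : E → ℝ) (h' : E → E)
    (hdiff : ∀ x, HasGradientAt h (h' x) x) (L : ℝ)
    (hlip : ∀ x y : E, ‖h' x - h' y‖ ≤ L * ‖x - y‖) (x y : E) :
    h y ≤ h x + ⟪h' x, y - x⟫ + L / 2 * ‖y - x‖ ^ 2 := by
  set v := y - x with hv
  set c₀ : ℝ := ⟪h' x, v⟫ with hc₀
  set φ : ℝ → ℝ := fun t => h (x + t • v) - t * c₀ - (L / 2 * ‖v‖ ^ 2) * t ^ 2 with hφdef
  have hφ : ∀ t : ℝ, HasDerivAt φ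
      (⟪h' (x + t • v), v⟫ - c₀ - (L / 2 * ‖v‖ ^ 2) * (2 * t ^ 1)) t := by
    intro t
    have := ((hasDerivAt_comp_line' h h' hdiff x v t).sub
      ((hasDerivAt_id t).mul_const c₀)).sub ((hasDerivAt_pow 2 t).const_mul (L / 2 * ‖v‖ ^ 2))
    exact this.congr_deriv (by norm_num)
  have hanti : AntitoneOn φ (Set.Icc (0:ℝ) 1) := by
    apply antitoneOn_of_deriv_nonpos (convex_Icc 0 1)
    · exact fun t _ => ((hφ t).continuousAt).continuousWithinAt
    · intro t _
      exact ((hφ t).differentiableAt).differentiableWithinAt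
    · intro t ht
      rw [interior_Icc] at ht
      rw [(hφ t).deriv]
      have h1 : ⟪h' (x + t • v), v⟫ - c₀ = ⟪h' (x + t • v) - h' x, v⟫ := by
        rw [inner_sub_left]
      have h2 : ⟪h' (x + t • v) - h' x, v⟫ ≤ ‖h' (x + t • v) - h' x‖ * ‖v‖ :=
        real_inner_le_norm _ _
      have h3 : ‖h' (x + t • v) - h' x‖ ≤ L * (t * ‖v‖) := by
        have := hlip (x + t • v) x
        simpa [norm_smul, abs_of_pos ht.1] using this
      have h4 : ‖h' (x + t • v) - h' x‖ * ‖v‖ ≤ L * (t * ‖v‖) * ‖v‖ :=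
        mul_le_mul_of_nonneg_right h3 (norm_nonneg _)
      rw [h1]
      nlinarith [norm_nonneg v]
  have := hanti (Set.left_mem_Icc.2 zero_le_one) (Set.right_mem_Icc.2 zero_le_one) zero_le_one
  have hφ0 : φ 0 = h x := by simp [hφdef]
  have hφ1 : φ 1 = h (x + v) - c₀ - L / 2 * ‖v‖ ^ 2 := by simp [hφdef]
  have hxy : x + v = y := by rw [hv]; abel
  rw [hφ0, hφ1, hxy] at this
  linarith

end AuxLemmas

section AlgLemmas

open scoped RealInnerProductSpace

variable {p : ℕ}

lemma dInner_self_nonneg (d : Fin p → ℝ) (hd : ∀ i, 0 ≤ d i) (z : EuclideanSpace ℝ (Fin p)) :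
    0 ≤ dInner d z z :=
  Finset.sum_nonneg fun i _ => by rw [mul_assoc]; exact mul_nonneg (hd i) (mul_self_nonneg _)

lemma dNorm_sq (d : Fin p → ℝ) (hd : ∀ i, 0 ≤ d i) (z : EuclideanSpace ℝ (Fin p)) :
    dNorm d z ^ 2 = dInner d z z :=
  Real.sq_sqrt (dInner_self_nonneg d hd z)

lemma dInner_expand (d : Fin p → ℝ) (t : ℝ) (x y : EuclideanSpace ℝ (Fin p)) :
    dInner d (x + t • y) (x + t • y)
      = dInner d x x + 2 * t * dInner d x y + t ^ 2 * dInner d y y := by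
  simp only [dInner, PiLp.add_apply, PiLp.smul_apply, smul_eq_mul, Finset.mul_sum,
    ← Finset.sum_add_distrib]
  exact Finset.sum_congr rfl fun i _ => by ring

lemma euclid_norm_sq (z : EuclideanSpace ℝ (Fin p)) : ‖z‖ ^ 2 = ∑ i, z i ^ 2 := by
  rw [EuclideanSpace.norm_eq, Real.sq_sqrt (by positivity)]
  simp [sq_abs]

lemma c₁_norm_le (d : Fin p → ℝ) (c₁ : ℝ) (hd : ∀ i, c₁ ≤ d i) (z : EuclideanSpace ℝ (Fin p)) :
    c₁ * ‖z‖ ^ 2 ≤ dInner d z z := by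
  rw [euclid_norm_sq, Finset.mul_sum, dInner]
  apply Finset.sum_le_sum
  intro i _
  have : d i * z i * z i = d i * z i ^ 2 := by ring
  rw [mul_comm (c₁) (z i ^ 2)] at *
  nlinarith [sq_nonneg (z i), hd i]

lemma key_identity (d : Fin p → ℝ) (hd : ∀ i, d i ≠ 0) (γ : ℝ)
    (β β' ξ q w : EuclideanSpace ℝ (Fin p)) :
    dInner d (q - β') (q - β') + 2 * dInner d (q - β') (ξ - γ • dInvMul d w - β)
      - dInner d (β' - ξ) (β' - ξ) + 2 * γ * (⟪w, q - ξ⟫ - ⟪w, β' - ξ⟫)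
      + dInner d (q - ξ) (q - ξ) + 2 * dInner d (q - β) (β' - q) = 0 := by
  simp only [dInner, dInvMul, PiLp.inner_apply, RCLike.inner_apply, conj_trivial,
    PiLp.sub_apply, PiLp.smul_apply, PiLp.toLp_apply, smul_eq_mul, Finset.mul_sum, ← Finset.sum_sub_distrib,
    ← Finset.sum_add_distrib]
  refine Finset.sum_eq_zero fun i _ => ?_
  have h := hd i
  field_simp
  ring

end AlgLemmas

open scoped RealInnerProductSpace in
/-- For `h` convex differentiable with L-Lipschitz gradient, `g` convex,
`F = h + g`, `D` diagonal with entries in `[c₁, c₂]`, `γ ∈ (0, c₁/L]`, and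
`q = Prox_{γ,g}^D(β)`, for all `β', ξ`:
`−2γ(F(q) − F(β')) ≥ ‖q − β'‖_D² + 2⟨q − β', ξ − γ D⁻¹∇h(ξ) − β⟩_D − ‖β' − ξ‖_D²`. -/
theorem stmt_4 {p : ℕ} (hp : 1 ≤ p)
    (h g : EuclideanSpace ℝ (Fin p) → ℝ)
    (h' : EuclideanSpace ℝ (Fin p) → EuclideanSpace ℝ (Fin p))
    (hh : ConvexOn ℝ Set.univ h)
    (hdiff : ∀ x, HasGradientAt h (h' x) x)
    (L : ℝ) (hL : 0 < L)
    (hlip : ∀ x y : EuclideanSpace ℝ (Fin p), ‖h' x - h' y‖ ≤ L * ‖x - y‖)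
    (hg : ConvexOn ℝ Set.univ g)
    (c₁ c₂ : ℝ) (hc₁ : 0 < c₁) (hc₁₂ : c₁ ≤ c₂)
    (d : Fin p → ℝ) (hd : ∀ i, d i ∈ Set.Icc c₁ c₂)
    (γ : ℝ) (hγ : 0 < γ) (hγL : γ ≤ c₁ / L)
    (β β' ξ q : EuclideanSpace ℝ (Fin p))
    (hq : ∀ x : EuclideanSpace ℝ (Fin p),
      g q + (1 / (2 * γ)) * (dNorm d (q - β)) ^ 2 ≤
        g x + (1 / (2 * γ)) * (dNorm d (x - β)) ^ 2) :
    -(2 * γ) * ((h q + g q) - (h β' + g β')) ≥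
      (dNorm d (q - β')) ^ 2 +
        2 * dInner d (q - β') (ξ - γ • dInvMul d (h' ξ) - β) -
        (dNorm d (β' - ξ)) ^ 2 := by
  have hd0 : ∀ i, 0 ≤ d i := fun i => le_trans hc₁.le (hd i).1
  have hdne : ∀ i, d i ≠ 0 := fun i => ne_of_gt (lt_of_lt_of_le hc₁ (hd i).1)
  have hdc : ∀ i, c₁ ≤ d i := fun i => (hd i).1
  -- Prox (first-order optimality) inequality
  set A : ℝ := dInner d (q - β) (β' - q) with hA
  set B : ℝ := dInner d (β' - q) (β' - q) with hB
  have hBnn : 0 ≤ B := dInner_self_nonneg d hd0 _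
  have step : ∀ t : ℝ, 0 < t → t ≤ 1 → γ * (g q - g β') ≤ A + t * B / 2 := by
    intro t ht ht1
    have hx := hq (q + t • (β' - q))
    rw [dNorm_sq d hd0, dNorm_sq d hd0] at hx
    have hxt : q + t • (β' - q) - β = (q - β) + t • (β' - q) := by abel
    rw [hxt, dInner_expand] at hx
    have hconv : g (q + t • (β' - q)) ≤ (1 - t) * g q + t * g β' := by
      have := hg.2 (Set.mem_univ q) (Set.mem_univ β') (show (0:ℝ) ≤ 1 - t by linarith) ht.le
        (show (1 - t) + t = 1 by ring)
      have he : (1 - t) • q + t • β' = q + t • (β' - q) := by module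
      rw [he] at this
      simpa using this
    have hiii : t * (g q - g β') ≤ (1 / (2 * γ)) * (2 * t * A + t ^ 2 * B) := by
      have e : (1 / (2 * γ)) * (dInner d (q - β) (q - β) + 2 * t * A + t ^ 2 * B)
          = (1 / (2 * γ)) * dInner d (q - β) (q - β)
            + (1 / (2 * γ)) * (2 * t * A + t ^ 2 * B) := by ring
      rw [e] at hx
      linarith
    have hmul := mul_le_mul_of_nonneg_left hiii (le_of_lt (div_pos hγ ht))
    have e1 : (γ / t) * (t * (g q - g β')) = γ * (g q - g β') := by
      field_simp
    have e2 : (γ / t) * ((1 / (2 * γ)) * (2 * t * A + t ^ 2 * B)) = A + t * B / 2 := by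
      field_simp
    rw [e1, e2] at hmul
    exact hmul
  have F1 : γ * (g q - g β') ≤ A := by
    by_contra hcon
    push_neg at hcon
    set δ : ℝ := γ * (g q - g β') - A with hδ
    have hδpos : 0 < δ := by simp [hδ]; linarith
    set t : ℝ := min 1 (δ / (B + 1)) with htdef
    have htpos : 0 < t := lt_min one_pos (div_pos hδpos (by linarith))
    have ht1 : t ≤ 1 := min_le_left _ _
    have ht2 : t ≤ δ / (B + 1) := min_le_right _ _
    have h5 : t * B ≤ δ / (B + 1) * B := mul_le_mul_of_nonneg_right ht2 hBnn
    have h6 : δ / (B + 1) * B ≤ δ := by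
      rw [div_mul_eq_mul_div, div_le_iff₀ (by linarith : (0:ℝ) < B + 1)]
      nlinarith
    have := step t htpos ht1
    have hhalf : t * B / 2 ≤ δ / 2 := by linarith
    simp only [hδ] at hhalf this
    linarith
  -- descent and convexity of h
  have F2 : h q ≤ h ξ + ⟪h' ξ, q - ξ⟫ + L / 2 * ‖q - ξ‖ ^ 2 :=
    descent_lemma' h h' hdiff L hlip ξ q
  have F3 : h ξ + ⟪h' ξ, β' - ξ⟫ ≤ h β' := grad_convex_ineq' h h' hh hdiff ξ β'
  have F4 : γ * L * ‖q - ξ‖ ^ 2 ≤ dInner d (q - ξ) (q - ξ) := by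
    have hγL' : γ * L ≤ c₁ := by
      rw [le_div_iff₀ hL] at hγL
      exact hγL
    calc γ * L * ‖q - ξ‖ ^ 2 ≤ c₁ * ‖q - ξ‖ ^ 2 :=
          mul_le_mul_of_nonneg_right hγL' (sq_nonneg _)
      _ ≤ dInner d (q - ξ) (q - ξ) := c₁_norm_le d c₁ hdc _
  have F5 := key_identity d hdne γ β β' ξ q (h' ξ)
  have F23 : h q - h β' ≤ (⟪h' ξ, q - ξ⟫ - ⟪h' ξ, β' - ξ⟫) + L / 2 * ‖q - ξ‖ ^ 2 := by
    linarith
  have F23' := mul_le_mul_of_nonneg_left F23 (by positivity : (0:ℝ) ≤ 2 * γ)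
  have e3 : 2 * γ * ((⟪h' ξ, q - ξ⟫ - ⟪h' ξ, β' - ξ⟫) + L / 2 * ‖q - ξ‖ ^ 2)
      = 2 * γ * (⟪h' ξ, q - ξ⟫ - ⟪h' ξ, β' - ξ⟫) + γ * L * ‖q - ξ‖ ^ 2 := by ring
  rw [e3] at F23'
  rw [ge_iff_le, dNorm_sq d hd0, dNorm_sq d hd0]
  nlinarith [F1, F23', F4, F5]
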